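/- Let n ≥ 2 be an integer, n′ = n/(n−1), and let A be a finite-valued Young function with A(t) > 0 for t > 0 and ∫₀ (τ/A(τ))^{1/(n−1)} dτ < ∞ near zero. Suppose there exists ε ∈ (0, 1/n) such that t ↦ A(t)/t^{1+ε} is nondecreasing on (0,∞). Then for every t > 0: ∫₀^t (A(τ)/τ)^{(n−2)/(n−1)} H_n(τ)^{−1/(n−1)} dτ ≤ n′ (1−ε) (A(t)/t) H_n(t). -/

import Mathlib

open MeasureTheory Set Filter
open scoped ENNReal

/-- A finite-valued Young function: convex, vanishing at `0`, nonnegative on `[0,∞)`,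
and not identically zero there. -/
structure IsYoung (A : ℝ → ℝ) : Prop where
  zero : A 0 = 0
  nonneg : ∀ t, 0 ≤ t → 0 ≤ A t
  convex : ConvexOn ℝ (Set.Ici 0) A
  nontrivial : ∃ t, 0 < t ∧ 0 < A t

/-- `H_n(t) = ( ∫₀^t (τ/A(τ))^{1/(n−1)} dτ )^{1/n′}`, where `n′ = n/(n−1)`. -/
noncomputable def Hn (A : ℝ → ℝ) (n : ℕ) (t : ℝ) : ℝ :=
  ((∫⁻ τ in Set.Ioc (0:ℝ) t,
      ENNReal.ofReal ((τ / A τ) ^ (1/((n:ℝ)-1)))).toReal) ^ (((n:ℝ)-1)/n)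

/-- The inverse of `H_n` (as a generalized inverse). -/
noncomputable def HnInv (A : ℝ → ℝ) (n : ℕ) (t : ℝ) : ℝ :=
  sInf {s : ℝ | 0 ≤ s ∧ t ≤ Hn A n s}

/-- The Sobolev trace conjugate `A_T(t) = ∫₀^t A(H_n⁻¹(τ))/H_n⁻¹(τ) dτ`. -/
noncomputable def AT (A : ℝ → ℝ) (n : ℕ) (t : ℝ) : ℝ :=
  ∫ τ in Set.Ioc (0:ℝ) t, A (HnInv A n τ) / HnInv A n τ

/-- `∫₀ (τ/A(τ))^{1/(n−1)} dτ < ∞` near zero. -/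
def ConvNearZero (A : ℝ → ℝ) (n : ℕ) : Prop :=
  ∃ δ > (0:ℝ), (∫⁻ τ in Set.Ioc (0:ℝ) δ,
    ENNReal.ofReal ((τ / A τ) ^ (1/((n:ℝ)-1)))) < ⊤

/-- `∫^∞ (τ/A(τ))^{1/(n−1)} dτ = ∞`. -/
def DivNearInfty (A : ℝ → ℝ) (n : ℕ) : Prop :=
  (∫⁻ τ in Set.Ioi (1:ℝ), ENNReal.ofReal ((τ / A τ) ^ (1/((n:ℝ)-1)))) = ⊤

noncomputable def gfun (A : ℝ → ℝ) (n : ℕ) (s : ℝ) : ℝ≥0∞ :=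
  ENNReal.ofReal ((s / A s) ^ (1/((n:ℝ)-1)))

noncomputable def Gfun (A : ℝ → ℝ) (n : ℕ) (u : ℝ) : ℝ≥0∞ :=
  ∫⁻ s in Set.Ioc (0:ℝ) u, gfun A n s

lemma ratio_mono (A : ℝ → ℝ) (hA : IsYoung A) {s u : ℝ} (hs : 0 < s) (hsu : s ≤ u) :
    A s / s ≤ A u / u := by
  have hu : 0 < u := lt_of_lt_of_le hs hsu
  have ha : 0 ≤ 1 - s/u := by
    rw [sub_nonneg]
    exact div_le_one_of_le₀ hsu hu.le
  have hb : 0 ≤ s/u := by positivity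
  have hkey := hA.convex.2 (Set.mem_Ici.mpr le_rfl) (Set.mem_Ici.mpr hu.le) ha hb (by ring)
  simp only [smul_eq_mul, mul_zero, hA.zero, zero_add, div_mul_cancel₀ _ hu.ne'] at hkey
  -- hkey : A s ≤ (1 - s/u) * 0 + s/u * A u  (simplified)
  rw [div_le_div_iff₀ hs hu]
  have h2 : s / u * A u * u = s * A u := by field_simp
  nlinarith [mul_le_mul_of_nonneg_right hkey hu.le]

lemma gfun_anti (A : ℝ → ℝ) (n : ℕ) (hn : 2 ≤ n) (hA : IsYoung A)
    (hApos : ∀ t > (0:ℝ), 0 < A t) {s u : ℝ} (hs : 0 < s) (hsu : s ≤ u) :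
    gfun A n u ≤ gfun A n s := by
  have hu : 0 < u := lt_of_lt_of_le hs hsu
  have hm : (1:ℝ) ≤ (n:ℝ) - 1 := by
    have : (2:ℝ) ≤ (n:ℝ) := by exact_mod_cast hn
    linarith
  apply ENNReal.ofReal_le_ofReal
  apply Real.rpow_le_rpow (div_nonneg hu.le (hApos u hu).le) _ (one_div_nonneg.mpr (by linarith))
  rw [div_le_div_iff₀ (hApos u hu) (hApos s hs)]
  have := ratio_mono A hA hs hsu
  rw [div_le_div_iff₀ hs hu] at this
  nlinarith

lemma gfun_lower (A : ℝ → ℝ) (n : ℕ) (hn : 2 ≤ n) (hApos : ∀ t > (0:ℝ), 0 < A t)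
    (ε : ℝ) (hε0 : 0 < ε)
    (hratio : ∀ s t : ℝ, 0 < s → s ≤ t → A s / s ^ (1+ε) ≤ A t / t ^ (1+ε))
    {s t : ℝ} (hs : 0 < s) (hst : s ≤ t) :
    ENNReal.ofReal (((t / A t) ^ (1/((n:ℝ)-1)) * t ^ (ε/((n:ℝ)-1))) * s ^ (-(ε/((n:ℝ)-1))))
      ≤ gfun A n s := by
  have ht : 0 < t := lt_of_lt_of_le hs hst
  have hm : (1:ℝ) ≤ (n:ℝ) - 1 := by
    have : (2:ℝ) ≤ (n:ℝ) := by exact_mod_cast hn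
    linarith
  have hAt := hApos t ht
  have hAs := hApos s hs
  apply ENNReal.ofReal_le_ofReal
  -- first the un-rpowed inequality
  have key : (t / A t) * t ^ ε * s ^ (-ε) ≤ s / A s := by
    have h1 := hratio s t hs hst
    rw [div_le_div_iff₀ (by positivity) (by positivity)] at h1
    -- h1 : A s * t ^ (1+ε) ≤ A t * s ^ (1+ε)
    rw [Real.rpow_add ht, Real.rpow_one] at h1
    rw [Real.rpow_add hs, Real.rpow_one] at h1
    rw [Real.rpow_neg hs.le]
    have h2 : t / A t * t ^ ε * (s ^ ε)⁻¹ = (t * t ^ ε) / (A t * s ^ ε) := by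
      field_simp
    rw [h2, div_le_div_iff₀ (by positivity) hAs]
    nlinarith [h1]
  have expand : ((t / A t) * t ^ ε * s ^ (-ε)) ^ (1/((n:ℝ)-1)) =
      (t / A t) ^ (1/((n:ℝ)-1)) * t ^ (ε/((n:ℝ)-1)) * s ^ (-(ε/((n:ℝ)-1))) := by
    rw [Real.mul_rpow (by positivity) (by positivity),
        Real.mul_rpow (by positivity) (by positivity),
        ← Real.rpow_mul ht.le, ← Real.rpow_mul hs.le,
        show ε * (1/((n:ℝ)-1)) = ε/((n:ℝ)-1) by ring,
        show -ε * (1/((n:ℝ)-1)) = -(ε/((n:ℝ)-1)) by ring]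
  rw [← expand]
  exact Real.rpow_le_rpow (by positivity) key (one_div_nonneg.mpr (by linarith))

lemma lint_rpow_Ioc (t r : ℝ) (ht : 0 < t) (hr : -1 < r) :
    ∫⁻ s in Set.Ioc (0:ℝ) t, ENNReal.ofReal (s ^ r) =
      ENNReal.ofReal (t ^ (r+1) / (r+1)) := by
  have hInt : IntegrableOn (fun s : ℝ => s ^ r) (Set.Ioc (0:ℝ) t) := by
    have := (intervalIntegral.intervalIntegrable_rpow' (a := 0) (b := t) hr)
    rwa [intervalIntegrable_iff, uIoc_of_le ht.le] at this
  rw [← MeasureTheory.ofReal_integral_eq_lintegral_ofReal hInt ?_]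
  · congr 1
    have h2 : ∫ s in Set.Ioc (0:ℝ) t, s ^ r = ∫ s in (0:ℝ)..t, s ^ r := by
      rw [intervalIntegral.integral_of_le ht.le]
    rw [h2, integral_rpow (Or.inl hr), Real.zero_rpow (by linarith)]
    ring
  · filter_upwards [ae_restrict_mem measurableSet_Ioc] with s hs
    exact Real.rpow_nonneg hs.1.le r

lemma Gfun_crude_lower (A : ℝ → ℝ) (n : ℕ) (hn : 2 ≤ n) (hA : IsYoung A)
    (hApos : ∀ t > (0:ℝ), 0 < A t) {τ : ℝ} (hτ : 0 < τ) :
    ENNReal.ofReal τ * gfun A n τ ≤ Gfun A n τ := by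
  have : Gfun A n τ ≥ ∫⁻ s in Set.Ioc (0:ℝ) τ, gfun A n τ := by
    apply lintegral_mono_ae
    filter_upwards [ae_restrict_mem measurableSet_Ioc] with s hs
    exact gfun_anti A n hn hA hApos hs.1 hs.2
  calc ENNReal.ofReal τ * gfun A n τ
      = ∫⁻ _ in Set.Ioc (0:ℝ) τ, gfun A n τ := by
        rw [setLIntegral_const, Real.volume_Ioc, sub_zero, mul_comm]
    _ ≤ Gfun A n τ := this

lemma Gfun_piece_upper (A : ℝ → ℝ) (n : ℕ) (hn : 2 ≤ n) (hA : IsYoung A)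
    (hApos : ∀ t > (0:ℝ), 0 < A t) {τ t : ℝ} (hτ : 0 < τ) (hτt : τ ≤ t) :
    ∫⁻ s in Set.Ioc τ t, gfun A n s ≤ gfun A n τ * ENNReal.ofReal (t - τ) := by
  calc ∫⁻ s in Set.Ioc τ t, gfun A n s
      ≤ ∫⁻ _ in Set.Ioc τ t, gfun A n τ := by
        apply lintegral_mono_ae
        filter_upwards [ae_restrict_mem measurableSet_Ioc] with s hs
        exact gfun_anti A n hn hA hApos hτ hs.1.le
    _ = gfun A n τ * ENNReal.ofReal (t - τ) := by
        rw [setLIntegral_const, Real.volume_Ioc]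

lemma Gfun_split (A : ℝ → ℝ) (n : ℕ) {τ t : ℝ} (hτ : 0 < τ) (hτt : τ ≤ t) :
    Gfun A n t = Gfun A n τ + ∫⁻ s in Set.Ioc τ t, gfun A n s := by
  rw [Gfun, Gfun, ← lintegral_union measurableSet_Ioc
    (Set.Ioc_disjoint_Ioc_of_le le_rfl), Set.Ioc_union_Ioc_eq_Ioc hτ.le hτt]

lemma Gfun_finite (A : ℝ → ℝ) (n : ℕ) (hn : 2 ≤ n) (hA : IsYoung A)
    (hApos : ∀ t > (0:ℝ), 0 < A t)
    (hconv : ∃ δ > (0:ℝ), (∫⁻ τ in Set.Ioc (0:ℝ) δ,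
      ENNReal.ofReal ((τ / A τ) ^ (1/((n:ℝ)-1)))) < ⊤)
    {t : ℝ} (ht : 0 < t) : Gfun A n t < ⊤ := by
  obtain ⟨δ, hδ, hfin⟩ := hconv
  have hfin' : Gfun A n δ < ⊤ := hfin
  rcases le_or_gt t δ with h | h
  · exact lt_of_le_of_lt (lintegral_mono_set (Set.Ioc_subset_Ioc_right h)) hfin'
  · rw [Gfun_split A n hδ h.le]
    apply ENNReal.add_lt_top.mpr
    refine ⟨hfin', lt_of_le_of_lt (Gfun_piece_upper A n hn hA hApos hδ h.le) ?_⟩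
    exact ENNReal.mul_lt_top ENNReal.ofReal_lt_top ENNReal.ofReal_lt_top

lemma Gfun_refined_lower (A : ℝ → ℝ) (n : ℕ) (hn : 2 ≤ n)
    (hApos : ∀ t > (0:ℝ), 0 < A t)
    (ε : ℝ) (hε0 : 0 < ε) (hε1 : ε < 1)
    (hratio : ∀ s t : ℝ, 0 < s → s ≤ t → A s / s ^ (1+ε) ≤ A t / t ^ (1+ε))
    {t : ℝ} (ht : 0 < t) :
    ENNReal.ofReal ((((n:ℝ)-1)/(((n:ℝ)-1)-ε)) * t * ((t / A t) ^ (1/((n:ℝ)-1))))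
      ≤ Gfun A n t := by
  have hm : (1:ℝ) ≤ (n:ℝ) - 1 := by
    have : (2:ℝ) ≤ (n:ℝ) := by exact_mod_cast hn
    linarith
  have hm0 : (0:ℝ) < (n:ℝ) - 1 := by linarith
  have hε' : ε/((n:ℝ)-1) < 1 := by
    rw [div_lt_one hm0]; linarith
  have hε'0 : 0 < ε/((n:ℝ)-1) := by positivity
  have hK0 : 0 ≤ (t / A t) ^ (1/((n:ℝ)-1)) * t ^ (ε/((n:ℝ)-1)) := by
    apply mul_nonneg (Real.rpow_nonneg (div_nonneg ht.le (hApos t ht).le) _) (by positivity)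
  have h1 : ∫⁻ s in Set.Ioc (0:ℝ) t,
      ENNReal.ofReal (((t / A t) ^ (1/((n:ℝ)-1)) * t ^ (ε/((n:ℝ)-1))) * s ^ (-(ε/((n:ℝ)-1))))
        ≤ Gfun A n t := by
    apply lintegral_mono_ae
    filter_upwards [ae_restrict_mem measurableSet_Ioc] with s hs
    exact gfun_lower A n hn hApos ε hε0 hratio hs.1 hs.2
  refine le_trans (le_of_eq ?_) h1
  have h2 : ∫⁻ s in Set.Ioc (0:ℝ) t,
      ENNReal.ofReal (((t / A t) ^ (1/((n:ℝ)-1)) * t ^ (ε/((n:ℝ)-1))) * s ^ (-(ε/((n:ℝ)-1))))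
      = ENNReal.ofReal ((t / A t) ^ (1/((n:ℝ)-1)) * t ^ (ε/((n:ℝ)-1))) *
          ENNReal.ofReal (t ^ (-(ε/((n:ℝ)-1))+1) / (-(ε/((n:ℝ)-1))+1)) := by
    simp_rw [ENNReal.ofReal_mul hK0]
    rw [lintegral_const_mul' _ _ ENNReal.ofReal_ne_top,
      lint_rpow_Ioc t (-(ε/((n:ℝ)-1))) ht (by linarith)]
  rw [h2, ← ENNReal.ofReal_mul hK0]
  congr 1
  have hT : t ^ (ε/((n:ℝ)-1)) * t ^ (-(ε/((n:ℝ)-1))+1) = t := by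
    rw [← Real.rpow_add ht, show ε/((n:ℝ)-1) + (-(ε/((n:ℝ)-1))+1) = 1 by ring, Real.rpow_one]
  have hden : -(ε/((n:ℝ)-1))+1 = ((n:ℝ)-1-ε)/((n:ℝ)-1) := by field_simp; ring
  have hdenne : ((n:ℝ)-1-ε) ≠ 0 := by
    have : ε < (n:ℝ)-1 := by linarith
    linarith
  calc (((n:ℝ)-1)/(((n:ℝ)-1)-ε)) * t * ((t / A t) ^ (1/((n:ℝ)-1)))
      = (t / A t) ^ (1/((n:ℝ)-1)) * (t ^ (ε/((n:ℝ)-1)) * t ^ (-(ε/((n:ℝ)-1))+1)) /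
          ((((n:ℝ)-1)-ε)/((n:ℝ)-1)) := by
        rw [hT]; field_simp
    _ = (t / A t) ^ (1/((n:ℝ)-1)) * t ^ (ε/((n:ℝ)-1)) * (t ^ (-(ε/((n:ℝ)-1))+1) /
          (-(ε/((n:ℝ)-1))+1)) := by
        rw [hden]; ring

lemma Gfun_ratio (A : ℝ → ℝ) (n : ℕ) (hn : 2 ≤ n) (hA : IsYoung A)
    (hApos : ∀ t > (0:ℝ), 0 < A t) {τ t : ℝ} (hτ : 0 < τ) (hτt : τ ≤ t)
    (hfin : Gfun A n t ≠ ⊤) :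
    (Gfun A n t).toReal * τ ≤ (Gfun A n τ).toReal * t := by
  have hτfin : Gfun A n τ ≠ ⊤ :=
    ne_top_of_le_ne_top hfin (lintegral_mono_set (Set.Ioc_subset_Ioc_right hτt))
  have ht : 0 < t := lt_of_lt_of_le hτ hτt
  have hEN : Gfun A n t ≤ ENNReal.ofReal (t/τ) * Gfun A n τ := by
    have hmid : gfun A n τ * ENNReal.ofReal (t-τ) =
        ENNReal.ofReal ((t-τ)/τ) * (ENNReal.ofReal τ * gfun A n τ) := by
      rw [← mul_assoc, ← ENNReal.ofReal_mul (div_nonneg (by linarith) hτ.le),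
        div_mul_cancel₀ _ hτ.ne', mul_comm]
    calc Gfun A n t = Gfun A n τ + ∫⁻ s in Set.Ioc τ t, gfun A n s :=
          Gfun_split A n hτ hτt
      _ ≤ Gfun A n τ + gfun A n τ * ENNReal.ofReal (t-τ) :=
          add_le_add_right (Gfun_piece_upper A n hn hA hApos hτ hτt) _
      _ = Gfun A n τ + ENNReal.ofReal ((t-τ)/τ) * (ENNReal.ofReal τ * gfun A n τ) := by
          rw [hmid]
      _ ≤ Gfun A n τ + ENNReal.ofReal ((t-τ)/τ) * Gfun A n τ :=
          add_le_add le_rfl (mul_le_mul_right (Gfun_crude_lower A n hn hA hApos hτ) _)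
      _ = (1 + ENNReal.ofReal ((t-τ)/τ)) * Gfun A n τ := by rw [add_mul, one_mul]
      _ = ENNReal.ofReal (t/τ) * Gfun A n τ := by
          rw [← ENNReal.ofReal_one,
            ← ENNReal.ofReal_add (by norm_num) (div_nonneg (by linarith) hτ.le),
            show (1:ℝ)+(t-τ)/τ = t/τ by field_simp; ring]
  have h3 := ENNReal.toReal_mono
    (ENNReal.mul_ne_top ENNReal.ofReal_ne_top hτfin) hEN
  rw [ENNReal.toReal_mul, ENNReal.toReal_ofReal (by positivity)] at h3
  have h4 := mul_le_mul_of_nonneg_right h3 hτ.le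
  calc (Gfun A n t).toReal * τ ≤ t/τ * (Gfun A n τ).toReal * τ := h4
    _ = (Gfun A n τ).toReal * t := by field_simp

lemma arith_ineq (m ε : ℝ) (hm : 2 ≤ m) (hε : 0 < ε) (hεm : ε * m < 1) :
    1 / (ε*(m-2)/(m-1) + (m-1)/m) ≤ (m/(m-1)) * (1-ε) * ((m-1)/(m-1-ε)) := by
  have hm1 : (0:ℝ) < m - 1 := by linarith
  have hm0 : (0:ℝ) < m := by linarith
  have hε1 : ε < 1 := by nlinarith
  have hmε : (0:ℝ) < m - 1 - ε := by nlinarith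
  have hd : (0:ℝ) < ε*(m-2)/(m-1) + (m-1)/m := by
    have h1 : 0 ≤ ε*(m-2)/(m-1) := by
      apply div_nonneg (mul_nonneg hε.le (by linarith)) (by linarith)
    have h2 : (0:ℝ) < (m-1)/m := by positivity
    linarith
  rw [div_le_iff₀ hd]
  have key : 0 ≤ ε * (m-2) * (1 - ε*m) :=
    mul_nonneg (mul_nonneg hε.le (by linarith)) (by linarith)
  rw [div_add_div _ _ (by positivity) (by positivity)]
  rw [show m / (m - 1) * (1 - ε) * ((m - 1) / (m - 1 - ε)) = (m*(1-ε))/(m-1-ε) by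
    field_simp]
  rw [div_mul_div_comm, le_div_iff₀ (by positivity), one_mul]
  nlinarith [key, mul_pos hm1 hm0]

lemma Hn_eq (A : ℝ → ℝ) (n : ℕ) (x : ℝ) :
    Hn A n x = ((Gfun A n x).toReal) ^ (((n:ℝ)-1)/n) := rfl

theorem integral_bound_Hn (n : ℕ) (hn : 2 ≤ n) (A : ℝ → ℝ) (hA : IsYoung A)
    (hApos : ∀ t > (0:ℝ), 0 < A t)
    (hconv : ConvNearZero A n)
    (ε : ℝ) (hε0 : 0 < ε) (hε1 : ε < 1/n)
    (hratio : ∀ s t : ℝ, 0 < s → s ≤ t → A s / s ^ (1+ε) ≤ A t / t ^ (1+ε)) :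
    ∀ t > (0:ℝ),
      (∫⁻ τ in Set.Ioc (0:ℝ) t,
          ENNReal.ofReal ((A τ / τ) ^ (((n:ℝ)-2)/((n:ℝ)-1)) *
            (Hn A n τ) ^ (-(1/((n:ℝ)-1))))) ≤
        ENNReal.ofReal (((n:ℝ)/((n:ℝ)-1)) * (1-ε) * (A t / t) * Hn A n t) := by
  intro t ht
  have hm2 : (2:ℝ) ≤ (n:ℝ) := by exact_mod_cast hn
  have hm1 : (0:ℝ) < (n:ℝ) - 1 := by linarith
  have hm0 : (0:ℝ) < (n:ℝ) := by linarith
  have hεn : ε * (n:ℝ) < 1 := by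
    have h2 : ε * (n:ℝ) < (1/(n:ℝ)) * (n:ℝ) := mul_lt_mul_of_pos_right hε1 hm0
    have h3 : (1/(n:ℝ)) * (n:ℝ) = 1 := by field_simp
    linarith
  have hεlt1 : ε < 1 := by nlinarith
  have hεm1 : 0 < (n:ℝ) - 1 - ε := by linarith
  have hAt := hApos t ht
  have hBt : 0 < A t / t := by positivity
  have hGfin : Gfun A n t ≠ ⊤ := (Gfun_finite A n hn hA hApos hconv ht).ne
  simp only [Hn_eq]
  set Gtr := (Gfun A n t).toReal with hGtr
  have hlow0 : ((((n:ℝ)-1)/(((n:ℝ)-1)-ε)) * t * ((t / A t) ^ (1/((n:ℝ)-1)))) ≤ Gtr := by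
    have h1 := Gfun_refined_lower A n hn hApos ε hε0 hεlt1 hratio ht
    have h2 := ENNReal.toReal_mono hGfin h1
    rwa [ENNReal.toReal_ofReal (mul_nonneg (mul_nonneg
      (div_pos hm1 hεm1).le ht.le) (Real.rpow_nonneg (by positivity) _))] at h2
  have hGtrpos : 0 < Gtr :=
    lt_of_lt_of_le (mul_pos (mul_pos (div_pos hm1 hεm1) ht)
      (Real.rpow_pos_of_pos (by positivity) _)) hlow0
  set p := ((n:ℝ)-2)/((n:ℝ)-1) with hp
  have hp0 : 0 ≤ p := div_nonneg (by linarith) (by linarith)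
  set α := ε * p - 1/(n:ℝ) with hα
  have hαgt : -1 < α := by
    have h1 : 0 ≤ ε*p := mul_nonneg hε0.le hp0
    have h2 : 1/(n:ℝ) < 1 := by rw [div_lt_one hm0]; linarith
    simp only [hα]; linarith
  have hα1 : α + 1 = ε*((n:ℝ)-2)/((n:ℝ)-1) + ((n:ℝ)-1)/(n:ℝ) := by
    rw [hα, hp]; field_simp; ring
  set CC := (A t / t) ^ p * Gtr ^ (-(1/(n:ℝ))) * t ^ (-α) with hCC
  have hCC0 : 0 ≤ CC :=
    mul_nonneg (mul_nonneg (Real.rpow_nonneg hBt.le _)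
      (Real.rpow_nonneg hGtrpos.le _)) (Real.rpow_nonneg ht.le _)
  have hpt : ∀ τ ∈ Set.Ioc (0:ℝ) t,
      (A τ / τ) ^ p * ((Gfun A n τ).toReal ^ (((n:ℝ)-1)/(n:ℝ))) ^ (-(1/((n:ℝ)-1)))
        ≤ CC * τ ^ α := by
    rintro τ ⟨hτ0, hτt⟩
    have hGτfin : Gfun A n τ ≠ ⊤ :=
      ne_top_of_le_ne_top hGfin (lintegral_mono_set (Set.Ioc_subset_Ioc_right hτt))
    set Gτr := (Gfun A n τ).toReal with hGτr
    have hτtpos : 0 < τ/t := div_pos hτ0 ht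
    have hratioG : Gtr * (τ/t) ≤ Gτr := by
      have h1 := Gfun_ratio A n hn hA hApos hτ0 hτt hGfin
      have h2 : Gtr * (τ/t) = Gtr*τ/t := by ring
      rw [h2, div_le_iff₀ ht]
      exact h1
    have hstep1 : (Gτr ^ (((n:ℝ)-1)/(n:ℝ))) ^ (-(1/((n:ℝ)-1))) = Gτr ^ (-(1/(n:ℝ))) := by
      rw [← Real.rpow_mul ENNReal.toReal_nonneg]
      congr 1
      field_simp
      all_goals ring
    have hstep2 : Gτr ^ (-(1/(n:ℝ))) ≤ (Gtr * (τ/t)) ^ (-(1/(n:ℝ))) :=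
      Real.rpow_le_rpow_of_nonpos (mul_pos hGtrpos hτtpos) hratioG
        (neg_nonpos.mpr (by positivity))
    have hstep3 : (Gtr * (τ/t)) ^ (-(1/(n:ℝ))) = Gtr ^ (-(1/(n:ℝ))) * (τ/t) ^ (-(1/(n:ℝ))) :=
      Real.mul_rpow hGtrpos.le hτtpos.le
    have hBle : A τ / τ ≤ (A t / t) * (τ/t) ^ ε := by
      have h1 := hratio τ t hτ0 hτt
      rw [div_le_div_iff₀ (by positivity) (by positivity)] at h1
      rw [Real.rpow_add ht, Real.rpow_one, Real.rpow_add hτ0, Real.rpow_one] at h1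
      have h2 : (A t / t) * (τ/t) ^ ε = (A t * τ ^ ε)/(t * t ^ ε) := by
        rw [Real.div_rpow hτ0.le ht.le]
        field_simp
      rw [h2, div_le_div_iff₀ hτ0 (by positivity)]
      nlinarith [h1]
    have hstep4 : (A τ/τ) ^ p ≤ (A t/t) ^ p * (τ/t) ^ (ε*p) := by
      calc (A τ/τ) ^ p ≤ ((A t/t) * (τ/t) ^ ε) ^ p :=
            Real.rpow_le_rpow (div_nonneg (hA.nonneg τ hτ0.le) hτ0.le) hBle hp0
        _ = (A t/t) ^ p * (τ/t) ^ (ε*p) := by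
            rw [Real.mul_rpow hBt.le (by positivity), ← Real.rpow_mul hτtpos.le]
    calc (A τ / τ) ^ p * (Gτr ^ (((n:ℝ)-1)/(n:ℝ))) ^ (-(1/((n:ℝ)-1)))
        = (A τ / τ) ^ p * Gτr ^ (-(1/(n:ℝ))) := by rw [hstep1]
      _ ≤ ((A t/t) ^ p * (τ/t) ^ (ε*p)) * (Gtr ^ (-(1/(n:ℝ))) * (τ/t) ^ (-(1/(n:ℝ)))) := by
          apply mul_le_mul hstep4 (le_trans hstep2 (le_of_eq hstep3))
            (Real.rpow_nonneg ENNReal.toReal_nonneg _)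
            (mul_nonneg (Real.rpow_nonneg hBt.le _) (Real.rpow_nonneg hτtpos.le _))
      _ = CC * τ ^ α := by
          have h5 : (τ/t) ^ (ε*p) * (τ/t) ^ (-(1/(n:ℝ))) = (τ/t) ^ α := by
            rw [← Real.rpow_add hτtpos]
            congr 1
            all_goals (rw [hα]; ring)
          have h6 : (τ/t) ^ α = τ ^ α * t ^ (-α) := by
            rw [Real.div_rpow hτ0.le ht.le, Real.rpow_neg ht.le, div_eq_mul_inv]
          calc ((A t/t) ^ p * (τ/t) ^ (ε*p)) * (Gtr ^ (-(1/(n:ℝ))) * (τ/t) ^ (-(1/(n:ℝ))))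
              = (A t/t) ^ p * Gtr ^ (-(1/(n:ℝ))) * ((τ/t) ^ (ε*p) * (τ/t) ^ (-(1/(n:ℝ)))) := by
                ring
            _ = (A t/t) ^ p * Gtr ^ (-(1/(n:ℝ))) * (τ ^ α * t ^ (-α)) := by rw [h5, h6]
            _ = CC * τ ^ α := by rw [hCC]; ring
  have hfinal : CC * (t ^ (α+1)/(α+1)) ≤
      ((n:ℝ)/((n:ℝ)-1)) * (1-ε) * (A t / t) * Gtr ^ (((n:ℝ)-1)/(n:ℝ)) := by
    have htpow : t ^ (-α) * t ^ (α+1) = t := by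
      rw [← Real.rpow_add ht, show -α+(α+1) = 1 by ring, Real.rpow_one]
    have hGsplit : Gtr ^ (((n:ℝ)-1)/(n:ℝ)) = Gtr ^ (-(1/(n:ℝ))) * Gtr := by
      rw [show ((n:ℝ)-1)/(n:ℝ) = -(1/(n:ℝ)) + 1 by field_simp; ring,
        Real.rpow_add hGtrpos, Real.rpow_one]
    have hα1pos : 0 < α + 1 := by linarith
    have hBtp : (A t/t) * ((t/A t) ^ (1/((n:ℝ)-1))) = (A t/t) ^ p := by
      have hinv : t/A t = (A t/t)⁻¹ := by rw [inv_div]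
      calc (A t/t) * ((t/A t) ^ (1/((n:ℝ)-1)))
          = (A t/t) ^ (1:ℝ) * ((A t/t) ^ (1/((n:ℝ)-1)))⁻¹ := by
            rw [hinv, Real.inv_rpow hBt.le, Real.rpow_one]
        _ = (A t/t) ^ (1:ℝ) * (A t/t) ^ (-(1/((n:ℝ)-1))) := by
            rw [← Real.rpow_neg hBt.le]
        _ = (A t/t) ^ ((1:ℝ) + -(1/((n:ℝ)-1))) := (Real.rpow_add hBt _ _).symm
        _ = (A t/t) ^ p := by
            congr 1
            rw [hp]; field_simp
            all_goals ring
    have hinner : (A t/t) ^ p * t * (((n:ℝ)-1)/(((n:ℝ)-1)-ε)) ≤ (A t/t) * Gtr := by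
      have h1 := mul_le_mul_of_nonneg_left hlow0 hBt.le
      calc (A t/t) ^ p * t * (((n:ℝ)-1)/(((n:ℝ)-1)-ε))
          = (((n:ℝ)-1)/(((n:ℝ)-1)-ε)) * t * ((A t/t) * ((t/A t) ^ (1/((n:ℝ)-1)))) := by
            rw [hBtp]; ring
        _ = (A t/t) * ((((n:ℝ)-1)/(((n:ℝ)-1)-ε)) * t * ((t/A t) ^ (1/((n:ℝ)-1)))) := by
            ring
        _ ≤ (A t/t) * Gtr := h1
    have harith : 1/(α+1) ≤ ((n:ℝ)/((n:ℝ)-1)) * (1-ε) * (((n:ℝ)-1)/(((n:ℝ)-1)-ε)) := by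
      rw [hα1]
      exact arith_ineq (n:ℝ) ε hm2 hε0 hεn
    have hpre0 : 0 ≤ (A t/t) ^ p * Gtr ^ (-(1/(n:ℝ))) * t :=
      mul_nonneg (mul_nonneg (Real.rpow_nonneg hBt.le _) (Real.rpow_nonneg hGtrpos.le _)) ht.le
    calc CC * (t ^ (α+1)/(α+1))
        = ((A t/t) ^ p * Gtr ^ (-(1/(n:ℝ)))) * (t ^ (-α) * t ^ (α+1)) * (1/(α+1)) := by
          rw [hCC]; ring
      _ = ((A t/t) ^ p * Gtr ^ (-(1/(n:ℝ))) * t) * (1/(α+1)) := by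
          rw [htpow]
          all_goals ring
      _ ≤ ((A t/t) ^ p * Gtr ^ (-(1/(n:ℝ))) * t) *
            (((n:ℝ)/((n:ℝ)-1)) * (1-ε) * (((n:ℝ)-1)/(((n:ℝ)-1)-ε))) :=
          mul_le_mul_of_nonneg_left harith hpre0
      _ = (((n:ℝ)/((n:ℝ)-1)) * (1-ε) * Gtr ^ (-(1/(n:ℝ)))) *
            ((A t/t) ^ p * t * (((n:ℝ)-1)/(((n:ℝ)-1)-ε))) := by ring
      _ ≤ (((n:ℝ)/((n:ℝ)-1)) * (1-ε) * Gtr ^ (-(1/(n:ℝ)))) * ((A t/t) * Gtr) := by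
          apply mul_le_mul_of_nonneg_left hinner
          have hn' : (0:ℝ) ≤ (n:ℝ)/((n:ℝ)-1) := by positivity
          exact mul_nonneg (mul_nonneg hn' (by linarith)) (Real.rpow_nonneg hGtrpos.le _)
      _ = ((n:ℝ)/((n:ℝ)-1)) * (1-ε) * (A t / t) * Gtr ^ (((n:ℝ)-1)/(n:ℝ)) := by
          rw [hGsplit]; ring
  calc (∫⁻ τ in Set.Ioc (0:ℝ) t,
        ENNReal.ofReal ((A τ / τ) ^ p *
          ((Gfun A n τ).toReal ^ (((n:ℝ)-1)/(n:ℝ))) ^ (-(1/((n:ℝ)-1)))))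
      ≤ ∫⁻ τ in Set.Ioc (0:ℝ) t, ENNReal.ofReal (CC * τ ^ α) := by
        apply lintegral_mono_ae
        filter_upwards [ae_restrict_mem measurableSet_Ioc] with τ hτ
        exact ENNReal.ofReal_le_ofReal (hpt τ hτ)
    _ = ENNReal.ofReal CC * ∫⁻ τ in Set.Ioc (0:ℝ) t, ENNReal.ofReal (τ ^ α) := by
        simp_rw [ENNReal.ofReal_mul hCC0]
        rw [lintegral_const_mul' _ _ ENNReal.ofReal_ne_top]
    _ = ENNReal.ofReal CC * ENNReal.ofReal (t ^ (α+1)/(α+1)) := by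
        rw [lint_rpow_Ioc t α ht hαgt]
    _ = ENNReal.ofReal (CC * (t ^ (α+1)/(α+1))) := (ENNReal.ofReal_mul hCC0).symm
    _ ≤ ENNReal.ofReal (((n:ℝ)/((n:ℝ)-1)) * (1-ε) * (A t / t) * Gtr ^ (((n:ℝ)-1)/(n:ℝ))) :=
        ENNReal.ofReal_le_ofReal hfinal
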